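/- Every brane diagram is Hanany–Witten equivalent to a separated brane diagram (one in which every NS5 brane precedes every D5 brane), and also to a co-separated brane diagram (one in which every D5 brane precedes every NS5 brane). -/
import Mathlib


/-- A (type A) brane diagram: a finite sequence of `N` 5-branes, each labeled NS5
(`isNS5 = true`) or D5 (`isNS5 = false`), indexed by `0, …, N-1`, together with
D3-brane multiplicities `d 0, …, d N` attached to the gaps, with `d 0 = d N = 0`.
The data is normalized to vanish outside the relevant range. -/
structure BraneDiagram where
  N : ℕ
  isNS5 : ℕ → Bool
  d : ℕ → ℤ
  d_zero : d 0 = 0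
  d_ge : ∀ i, N ≤ i → d i = 0
  isNS5_ge : ∀ p, N ≤ p → isNS5 p = false

/-- The charge of an NS5 brane at position `p`: `(d (p+1) - d p)` plus the number of
D5 branes at positions `< p`. -/
def BraneDiagram.nsCharge (D : BraneDiagram) (p : ℕ) : ℤ :=
  (D.d (p + 1) - D.d p) + ((Finset.range p).filter (fun q => D.isNS5 q = false)).card

/-- The charge of a D5 brane at position `p`: `(d p - d (p+1))` plus the number of
NS5 branes at positions `> p`. -/
def BraneDiagram.d5Charge (D : BraneDiagram) (p : ℕ) : ℤ :=
  (D.d p - D.d (p + 1)) + ((Finset.Ico (p + 1) D.N).filter (fun q => D.isNS5 q = true)).card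

/-- The charge of the brane at position `p`. -/
def BraneDiagram.charge (D : BraneDiagram) (p : ℕ) : ℤ :=
  if D.isNS5 p then D.nsCharge p else D.d5Charge p

/-- `HWMoveAt D D' p`: `D'` is obtained from `D` by a single Hanany-Witten move at
position `p`, replacing the adjacent pair `(NS5, D5)` at positions `p, p+1` by
`(D5, NS5)` and replacing the middle multiplicity `d (p+1)` by
`d p + d (p+2) - d (p+1) + 1`, all other data unchanged. -/
def HWMoveAt (D D' : BraneDiagram) (p : ℕ) : Prop :=
  p + 1 < D.N ∧ D'.N = D.N ∧
  D.isNS5 p = true ∧ D.isNS5 (p + 1) = false ∧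
  D'.isNS5 p = false ∧ D'.isNS5 (p + 1) = true ∧
  (∀ q, q ≠ p → q ≠ p + 1 → D'.isNS5 q = D.isNS5 q) ∧
  D'.d (p + 1) = D.d p + D.d (p + 2) - D.d (p + 1) + 1 ∧
  (∀ i, i ≠ p + 1 → D'.d i = D.d i)

/-- A Hanany-Witten move (in the forward direction) at some position. -/
def HWMove (D D' : BraneDiagram) : Prop := ∃ p, HWMoveAt D D' p

/-- Hanany-Witten equivalence: the equivalence relation generated by Hanany-Witten
moves (and their inverses). -/
def HWEquiv : BraneDiagram → BraneDiagram → Prop := Relation.EqvGen HWMove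

/-- A brane diagram is separated if every NS5 brane precedes every D5 brane. -/
def IsSeparated (D : BraneDiagram) : Prop :=
  ∀ p q, p < D.N → q < D.N → D.isNS5 p = true → D.isNS5 q = false → p < q

/-- A brane diagram is co-separated if every D5 brane precedes every NS5 brane. -/
def IsCoseparated (D : BraneDiagram) : Prop :=
  ∀ p q, p < D.N → q < D.N → D.isNS5 p = false → D.isNS5 q = true → p < q

def swapAt (D : BraneDiagram) (p : ℕ) (h : p + 1 < D.N) : BraneDiagram where
  N := D.N
  isNS5 q := if q = p then D.isNS5 (p+1) else if q = p+1 then D.isNS5 p else D.isNS5 q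
  d i := if i = p + 1 then D.d p + D.d (p+2) - D.d (p+1) + 1 else D.d i
  d_zero := by simp [D.d_zero]
  d_ge := fun i hi => by
    have h1 : i ≠ p + 1 := by omega
    simp [h1, D.d_ge i hi]
  isNS5_ge := fun q hq => by
    have h1 : q ≠ p := by omega
    have h2 : q ≠ p + 1 := by omega
    simp only [h1, h2, if_false]
    exact D.isNS5_ge q hq

lemma swapAt_move_fwd (D : BraneDiagram) (p : ℕ) (h : p + 1 < D.N)
    (h1 : D.isNS5 p = true) (h2 : D.isNS5 (p+1) = false) :
    HWMoveAt D (swapAt D p h) p := by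
  refine ⟨h, rfl, h1, h2, ?_, ?_, ?_, ?_, ?_⟩
  · simp [swapAt, h2]
  · simp [swapAt, h1]
  · intro q hq1 hq2; simp [swapAt, hq1, hq2]
  · simp [swapAt]
  · intro i hi; simp [swapAt, hi]

lemma swapAt_move_bwd (D : BraneDiagram) (p : ℕ) (h : p + 1 < D.N)
    (h1 : D.isNS5 p = false) (h2 : D.isNS5 (p+1) = true) :
    HWMoveAt (swapAt D p h) D p := by
  refine ⟨h, rfl, ?_, ?_, h1, h2, ?_, ?_, ?_⟩
  · simp [swapAt, h2]
  · simp [swapAt, h1]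
  · intro q hq1 hq2; simp [swapAt, hq1, hq2]
  · simp [swapAt]; ring
  · intro i hi; simp [swapAt, hi]

lemma swapAt_equiv (D : BraneDiagram) (p : ℕ) (h : p + 1 < D.N)
    (hne : D.isNS5 p ≠ D.isNS5 (p+1)) : HWEquiv D (swapAt D p h) := by
  cases h1 : D.isNS5 p with
  | true =>
    have h2 : D.isNS5 (p+1) = false := by
      cases h2 : D.isNS5 (p+1) <;> simp_all
    exact Relation.EqvGen.rel _ _ ⟨p, swapAt_move_fwd D p h h1 h2⟩
  | false =>
    have h2 : D.isNS5 (p+1) = true := by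
      cases h2 : D.isNS5 (p+1) <;> simp_all
    exact Relation.EqvGen.symm _ _
      (Relation.EqvGen.rel _ _ ⟨p, swapAt_move_bwd D p h h1 h2⟩)

lemma exists_adj (f : ℕ → Bool) (N : ℕ) :
    ∀ p q, q < p → p < N → f q = false → f p = true →
    ∃ r, r + 1 < N ∧ f r = false ∧ f (r+1) = true := by
  intro p
  induction p with
  | zero => intro q h; omega
  | succ n ih =>
    intro q hqp hp hq hfp
    cases hfn : f n with
    | false => exact ⟨n, by omega, hfn, hfp⟩
    | true =>
      have hqn : q < n := by
        rcases Nat.lt_or_ge q n with h | h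
        · exact h
        · have : q = n := by omega
          rw [this, hfn] at hq; cases hq
      exact ih q hqn (by omega) hq hfn

lemma sum_swap_lt (N p : ℕ) (hp : p + 1 < N) (g g' : ℕ → ℕ)
    (hagree : ∀ i, i ≠ p → i ≠ p + 1 → g' i = g i)
    (hlt : g' p + g' (p+1) < g p + g (p+1)) :
    ∑ i ∈ Finset.range N, g' i < ∑ i ∈ Finset.range N, g i := by
  have hpm : p ∈ Finset.range N := Finset.mem_range.2 (by omega)
  have hpm1 : p + 1 ∈ (Finset.range N).erase p :=
    Finset.mem_erase.2 ⟨by omega, Finset.mem_range.2 hp⟩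
  have key : ∀ h : ℕ → ℕ, ∑ i ∈ Finset.range N, h i =
      h p + (h (p+1) + ∑ i ∈ ((Finset.range N).erase p).erase (p+1), h i) := by
    intro h
    rw [← Finset.add_sum_erase _ h hpm, ← Finset.add_sum_erase _ h hpm1]
  rw [key g, key g']
  have : ∑ i ∈ ((Finset.range N).erase p).erase (p+1), g' i =
      ∑ i ∈ ((Finset.range N).erase p).erase (p+1), g i := by
    apply Finset.sum_congr rfl
    intro i hi
    simp only [Finset.mem_erase] at hi
    exact hagree i hi.2.1 hi.1
  rw [this]; omega

def mSep (D : BraneDiagram) : ℕ := ∑ i ∈ Finset.range D.N, if D.isNS5 i then i else 0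
def mCo (D : BraneDiagram) : ℕ := ∑ i ∈ Finset.range D.N, if D.isNS5 i then 0 else i

lemma toSep : ∀ n D, mSep D < n → ∃ D₁, HWEquiv D D₁ ∧ IsSeparated D₁ := by
  intro n
  induction n with
  | zero => intro D h; omega
  | succ n ih =>
    intro D h
    by_cases hs : IsSeparated D
    · exact ⟨D, Relation.EqvGen.refl D, hs⟩
    · simp only [IsSeparated, not_forall] at hs
      obtain ⟨p, q, hp, hq, hfp, hfq, hpq⟩ := hs
      have hqp : q < p := by
        rcases Nat.lt_trichotomy q p with h' | h' | h'
        · exact h'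
        · rw [h'] at hfq; rw [hfq] at hfp; cases hfp
        · exact absurd h' hpq
      obtain ⟨r, hr, hfr, hfr1⟩ := exists_adj D.isNS5 D.N p q hqp hp hfq hfp
      have hne : D.isNS5 r ≠ D.isNS5 (r+1) := by rw [hfr, hfr1]; simp
      have hdec : mSep (swapAt D r hr) < mSep D := by
        have hN : (swapAt D r hr).N = D.N := rfl
        unfold mSep
        rw [hN]
        apply sum_swap_lt D.N r hr
        · intro i hi1 hi2
          have : (swapAt D r hr).isNS5 i = D.isNS5 i := by simp [swapAt, hi1, hi2]
          rw [this]
        · have e1 : (swapAt D r hr).isNS5 r = true := by simp [swapAt, hfr1]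
          have e2 : (swapAt D r hr).isNS5 (r+1) = false := by simp [swapAt, hfr]
          rw [e1, e2, hfr, hfr1]
          simp
      obtain ⟨D₁, h1, h2⟩ := ih (swapAt D r hr) (by omega)
      exact ⟨D₁, Relation.EqvGen.trans _ _ _ (swapAt_equiv D r hr hne) h1, h2⟩

lemma toCo : ∀ n D, mCo D < n → ∃ D₂, HWEquiv D D₂ ∧ IsCoseparated D₂ := by
  intro n
  induction n with
  | zero => intro D h; omega
  | succ n ih =>
    intro D h
    by_cases hs : IsCoseparated D
    · exact ⟨D, Relation.EqvGen.refl D, hs⟩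
    · simp only [IsCoseparated, not_forall] at hs
      obtain ⟨p, q, hp, hq, hfp, hfq, hpq⟩ := hs
      have hqp : q < p := by
        rcases Nat.lt_trichotomy q p with h' | h' | h'
        · exact h'
        · rw [h'] at hfq; rw [hfq] at hfp; cases hfp
        · exact absurd h' hpq
      obtain ⟨r, hr, hfr, hfr1⟩ :=
        exists_adj (fun i => !D.isNS5 i) D.N p q hqp hp (by simp [hfq]) (by simp [hfp])
      simp only [Bool.not_eq_false', Bool.not_eq_true'] at hfr hfr1
      have hne : D.isNS5 r ≠ D.isNS5 (r+1) := by rw [hfr, hfr1]; simp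
      have hdec : mCo (swapAt D r hr) < mCo D := by
        have hN : (swapAt D r hr).N = D.N := rfl
        unfold mCo
        rw [hN]
        apply sum_swap_lt D.N r hr
        · intro i hi1 hi2
          have : (swapAt D r hr).isNS5 i = D.isNS5 i := by simp [swapAt, hi1, hi2]
          rw [this]
        · have e1 : (swapAt D r hr).isNS5 r = false := by simp [swapAt, hfr1]
          have e2 : (swapAt D r hr).isNS5 (r+1) = true := by simp [swapAt, hfr]
          rw [e1, e2, hfr, hfr1]
          simp
      obtain ⟨D₂, h1, h2⟩ := ih (swapAt D r hr) (by omega)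
      exact ⟨D₂, Relation.EqvGen.trans _ _ _ (swapAt_equiv D r hr hne) h1, h2⟩

/-- Every brane diagram is Hanany-Witten equivalent to a separated brane diagram,
and also to a co-separated brane diagram. -/
theorem stmt4 (D : BraneDiagram) :
    (∃ D₁, HWEquiv D D₁ ∧ IsSeparated D₁) ∧ (∃ D₂, HWEquiv D D₂ ∧ IsCoseparated D₂) := by
  exact ⟨toSep (mSep D + 1) D (by omega), toCo (mCo D + 1) D (by omega)⟩
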